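/- Let N > 0 and 0 < t < 1, and set I(N,t) = ∫_0^1 e^{−iN(y−t)^2} dy. Then |I(N,t) − √(π/N) e^{−iπ/4}| ≤ (1/t + 1/(1−t)) · (1/N). -/

import Mathlib

open Complex MeasureTheory intervalIntegral Filter Topology Set

lemma tail_bound0 {b : ℂ} {N : ℝ} (hN : 0 < N) (him : b.im = N) (hre : 0 ≤ b.re)
    {a R : ℝ} (ha : 0 < a) (haR : a ≤ R) :
    ‖∫ x in a..R, Complex.exp (-b * (x:ℂ)^2)‖ ≤ 1 / (N * a) := by
  have hb : b ≠ 0 := by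
    intro h; rw [h] at him; simp at him; linarith
  have habs : N ≤ ‖b‖ := by
    calc N = |b.im| := by rw [him, abs_of_pos hN]
    _ ≤ ‖b‖ := Complex.abs_im_le_norm b
  have habs2 : (‖(2:ℂ)‖ : ℝ) = 2 := Complex.norm_two
  have huIcc : Set.uIcc a R = Icc a R := uIcc_of_le haR
  have hpos : ∀ x ∈ Set.uIcc a R, 0 < x := by
    intro x hx; rw [huIcc] at hx; linarith [hx.1]
  set u : ℝ → ℂ := fun x => -(2 * b * (x:ℂ))⁻¹ with hu_def
  set w : ℝ → ℂ := fun x => Complex.exp (-b * (x:ℂ)^2) with hw_def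
  set u' : ℝ → ℂ := fun x => (2 * b)⁻¹ * ((x:ℂ)^2)⁻¹ with hu'_def
  set w' : ℝ → ℂ := fun x => (-2 * b * (x:ℂ)) * Complex.exp (-b * (x:ℂ)^2) with hw'_def
  have hu : ∀ x ∈ Set.uIcc a R, HasDerivAt u (u' x) x := by
    intro x hx
    have hx0 : (x:ℂ) ≠ 0 := by exact_mod_cast (hpos x hx).ne'
    have h1 : HasDerivAt (fun z : ℂ => 2 * b * z) (2 * b) (x:ℂ) := by
      simpa using (hasDerivAt_id (x:ℂ)).const_mul (2*b)
    have h2 := ((h1.inv (by simp [hb, hx0])).neg).comp_ofReal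
    convert h2 using 1
    · rfl
    rw [hu'_def]
    field_simp
  have hw : ∀ x ∈ Set.uIcc a R, HasDerivAt w (w' x) x := by
    intro x hx
    have h1 : HasDerivAt (fun z : ℂ => -b * z^2) (-b * (2*(x:ℂ))) (x:ℂ) := by
      simpa using (hasDerivAt_pow 2 (x:ℂ)).const_mul (-b)
    have h2 := (h1.cexp).comp_ofReal
    convert h2 using 1
    rw [hw'_def]
    ring
  have hu'int : IntervalIntegrable u' volume a R := by
    apply ContinuousOn.intervalIntegrable
    apply ContinuousOn.mul continuousOn_const
    apply ContinuousOn.inv₀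
    · fun_prop
    · intro x hx
      have hx0 : (x:ℂ) ≠ 0 := by exact_mod_cast (hpos x hx).ne'
      exact pow_ne_zero 2 hx0
  have hw'int : IntervalIntegrable w' volume a R := by
    apply ContinuousOn.intervalIntegrable
    fun_prop
  have key : ∫ x in a..R, Complex.exp (-b * (x:ℂ)^2) = ∫ x in a..R, u x * w' x := by
    apply integral_congr
    intro x hx
    have hx0 : (x:ℂ) ≠ 0 := by exact_mod_cast (hpos x hx).ne'
    simp only [hu_def, hw'_def]
    field_simp
  rw [key, integral_mul_deriv_eq_deriv_mul hu hw hu'int hw'int]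
  have hwnorm : ∀ x : ℝ, ‖w x‖ ≤ 1 := by
    intro x
    simp only [hw_def, Complex.norm_exp]
    apply Real.exp_le_one_iff.mpr
    have : (-b * ((x:ℂ))^2).re = -b.re * x^2 := by
      simp [Complex.mul_re, pow_two]
    rw [this]
    nlinarith [sq_nonneg x]
  have hunorm : ∀ x : ℝ, 0 < x → ‖u x‖ ≤ 1 / (2 * N * x) := by
    intro x hx
    simp only [hu_def, norm_neg, norm_inv]
    rw [norm_mul, norm_mul]
    simp only [Complex.norm_real, Real.norm_eq_abs, abs_of_pos hx]
    rw [one_div]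
    apply inv_anti₀ (by positivity)
    rw [habs2]
    nlinarith
  have hbound3 : ‖∫ x in a..R, u' x * w x‖ ≤ 1/(2*N) * (1/a - 1/R) := by
    have hg : ∀ x ∈ Set.Ioc a R, ‖u' x * w x‖ ≤ 1/(2*N) * x^(-2:ℤ) := by
      intro x hx
      have hx0 : 0 < x := lt_trans ha hx.1
      rw [norm_mul]
      have h1 : ‖u' x‖ ≤ 1/(2*N) * x^(-2:ℤ) := by
        simp only [hu'_def, norm_mul, norm_inv, norm_pow,
          Complex.norm_real, Real.norm_eq_abs]
        rw [abs_of_pos hx0, habs2]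
        have hxx : (x:ℝ)^(-2:ℤ) = ((x:ℝ)^2)⁻¹ := by
          rw [zpow_neg, zpow_two, sq]
        rw [hxx, one_div, ← mul_inv, ← mul_inv]
        apply inv_anti₀ (by positivity)
        nlinarith
      calc ‖u' x‖ * ‖w x‖ ≤ ‖u' x‖ * 1 :=
            mul_le_mul_of_nonneg_left (hwnorm x) (norm_nonneg _)
      _ = ‖u' x‖ := mul_one _
      _ ≤ 1/(2*N) * x^(-2:ℤ) := h1
    have hzint : IntervalIntegrable (fun x : ℝ => x^(-2:ℤ)) volume a R := by
      apply intervalIntegral.intervalIntegrable_zpow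
      right
      rw [huIcc]
      intro h; linarith [h.1]
    have hgint : IntervalIntegrable (fun x : ℝ => 1/(2*N) * x^(-2:ℤ)) volume a R :=
      hzint.const_mul _
    have hle := intervalIntegral.norm_integral_le_abs_of_norm_le
      (f := fun x : ℝ => u' x * w x) (g := fun x : ℝ => 1/(2*N) * x^(-2:ℤ)) ?_ hgint
    · have hmono : 1/R ≤ 1/a := one_div_le_one_div_of_le ha haR
      have hval : (∫ x in a..R, 1/(2*N) * (x:ℝ)^(-2:ℤ)) = 1/(2*N) * (1/a - 1/R) := by
        rw [intervalIntegral.integral_const_mul,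
          integral_zpow (Or.inr ⟨by norm_num, by rw [huIcc]; intro h; linarith [h.1]⟩)]
        norm_num
        left
        ring
      calc ‖∫ x in a..R, u' x * w x‖ ≤ |∫ x in a..R, 1/(2*N) * (x:ℝ)^(-2:ℤ)| := hle
      _ = 1/(2*N) * (1/a - 1/R) := by
          rw [hval, _root_.abs_of_nonneg (mul_nonneg (by positivity) (by linarith))]
    · rw [MeasureTheory.ae_restrict_iff' measurableSet_uIoc]
      refine MeasureTheory.ae_of_all _ fun x hx => ?_
      rw [uIoc_of_le haR] at hx
      exact hg x hx
  have hRpos : 0 < R := lt_of_lt_of_le ha haR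
  calc ‖u R * w R - u a * w a - ∫ x in a..R, u' x * w x‖
      ≤ ‖u R * w R - u a * w a‖ + ‖∫ x in a..R, u' x * w x‖ := norm_sub_le _ _
    _ ≤ (‖u R * w R‖ + ‖u a * w a‖) + ‖∫ x in a..R, u' x * w x‖ := by
        gcongr; exact norm_sub_le _ _
    _ ≤ (1/(2*N*R) + 1/(2*N*a)) + 1/(2*N) * (1/a - 1/R) := by
        gcongr
        · rw [norm_mul]
          calc ‖u R‖ * ‖w R‖ ≤ (1/(2*N*R)) * 1 :=
                mul_le_mul (hunorm R hRpos) (hwnorm R) (norm_nonneg _) (by positivity)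
          _ = 1/(2*N*R) := mul_one _
        · rw [norm_mul]
          calc ‖u a‖ * ‖w a‖ ≤ (1/(2*N*a)) * 1 :=
                mul_le_mul (hunorm a ha) (hwnorm a) (norm_nonneg _) (by positivity)
          _ = 1/(2*N*a) := mul_one _
    _ = 1 / (N * a) := by field_simp; ring

lemma tail_Ioi0 {b : ℂ} {N : ℝ} (hN : 0 < N) (him : b.im = N) (hre : 0 < b.re)
    {a : ℝ} (ha : 0 < a) :
    ‖∫ x in Set.Ioi a, Complex.exp (-b * (x:ℂ)^2)‖ ≤ 1 / (N * a) := by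
  have hint := (integrable_cexp_neg_mul_sq hre).integrableOn (s := Set.Ioi a)
  have htends := MeasureTheory.intervalIntegral_tendsto_integral_Ioi a hint
    (tendsto_id (α := ℝ) (x := atTop))
  apply le_of_tendsto htends.norm
  filter_upwards [eventually_ge_atTop a] with R hR
  exact tail_bound0 hN him hre.le ha hR

lemma tail_Iic0 {b : ℂ} {N : ℝ} (hN : 0 < N) (him : b.im = N) (hre : 0 < b.re)
    {a : ℝ} (ha : 0 < a) :
    ‖∫ x in Set.Iic (-a), Complex.exp (-b * (x:ℂ)^2)‖ ≤ 1 / (N * a) := by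
  have hint := (integrable_cexp_neg_mul_sq hre).integrableOn (s := Set.Iic (-a))
  have htends := MeasureTheory.intervalIntegral_tendsto_integral_Iic (-a) hint
    (tendsto_neg_atTop_atBot (G := ℝ))
  apply le_of_tendsto htends.norm
  filter_upwards [eventually_ge_atTop a] with R hR
  have heq : (∫ x in (-R)..(-a), Complex.exp (-b * (x:ℂ)^2))
      = ∫ x in a..R, Complex.exp (-b * (x:ℂ)^2) := by
    rw [← intervalIntegral.integral_comp_neg (fun x => Complex.exp (-b * (x:ℂ)^2))]
    apply intervalIntegral.integral_congr
    intro x hx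
    push_cast
    ring_nf
  rw [heq]
  exact tail_bound0 hN him hre.le ha hR

lemma eps_bound0 {b : ℂ} {N t : ℝ} (hN : 0 < N) (him : b.im = N) (hre : 0 < b.re)
    (ht0 : 0 < t) (ht1 : t < 1) :
    ‖(∫ x in (-t)..(1-t), Complex.exp (-b * (x:ℂ)^2)) - (↑Real.pi / b) ^ (1/2 : ℂ)‖
      ≤ 1/(N*t) + 1/(N*(1-t)) := by
  have hfull := integral_gaussian_complex hre
  have hint := integrable_cexp_neg_mul_sq hre
  have h1 : (∫ x in (-t)..(1-t), Complex.exp (-b * (x:ℂ)^2))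
      = (∫ x in Set.Iic (1-t), Complex.exp (-b * (x:ℂ)^2))
        - ∫ x in Set.Iic (-t), Complex.exp (-b * (x:ℂ)^2) :=
    (integral_Iic_sub_Iic hint.integrableOn hint.integrableOn).symm
  have h2 : (↑Real.pi / b) ^ (1/2 : ℂ)
      = (∫ x in Set.Iic (1-t), Complex.exp (-b * (x:ℂ)^2))
        + ∫ x in Set.Ioi (1-t), Complex.exp (-b * (x:ℂ)^2) := by
    rw [← hfull]
    exact (integral_Iic_add_Ioi hint.integrableOn hint.integrableOn).symm
  rw [h1, h2]
  have heq : ((∫ x in Set.Iic (1-t), Complex.exp (-b * (x:ℂ)^2))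
        - ∫ x in Set.Iic (-t), Complex.exp (-b * (x:ℂ)^2))
      - ((∫ x in Set.Iic (1-t), Complex.exp (-b * (x:ℂ)^2))
        + ∫ x in Set.Ioi (1-t), Complex.exp (-b * (x:ℂ)^2))
      = -((∫ x in Set.Iic (-t), Complex.exp (-b * (x:ℂ)^2))
        + ∫ x in Set.Ioi (1-t), Complex.exp (-b * (x:ℂ)^2)) := by ring
  rw [heq, norm_neg]
  calc ‖(∫ x in Set.Iic (-t), Complex.exp (-b * (x:ℂ)^2))
        + ∫ x in Set.Ioi (1-t), Complex.exp (-b * (x:ℂ)^2)‖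
      ≤ ‖∫ x in Set.Iic (-t), Complex.exp (-b * (x:ℂ)^2)‖
        + ‖∫ x in Set.Ioi (1-t), Complex.exp (-b * (x:ℂ)^2)‖ := norm_add_le _ _
    _ ≤ 1/(N*t) + 1/(N*(1-t)) := by
        gcongr
        · exact tail_Iic0 hN him hre ht0
        · exact tail_Ioi0 hN him hre (by linarith)

lemma hz0 {N : ℝ} (hN : 0 < N) :
    ((Real.pi : ℂ) / ((N:ℂ) * Complex.I)) = ((Real.pi/N : ℝ):ℂ) * (-Complex.I) := by
  have hb0 : (N:ℂ) * Complex.I ≠ 0 := by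
    simp [Complex.I_ne_zero, Complex.ofReal_ne_zero, hN.ne']
  rw [div_eq_iff hb0]
  push_cast
  have h2 : (Real.pi:ℂ) / (N:ℂ) * -Complex.I * ((N:ℂ) * Complex.I)
      = (Real.pi:ℂ) / (N:ℂ) * (N:ℂ) * (-(Complex.I*Complex.I)) := by ring
  rw [h2, Complex.I_mul_I]
  have hNne : (N:ℂ) ≠ 0 := Complex.ofReal_ne_zero.mpr (by exact_mod_cast hN.ne')
  field_simp

lemma heval0 {N : ℝ} (hN : 0 < N) :
    ((Real.pi : ℂ) / ((N:ℂ) * Complex.I)) ^ (1/2 : ℂ)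
      = (Real.sqrt (Real.pi / N) : ℂ) * Complex.exp (-Complex.I * (Real.pi : ℂ) / 4) := by
  have hπ := Real.pi_pos
  have hb0 : (N:ℂ) * Complex.I ≠ 0 := by
    simp [Complex.I_ne_zero, Complex.ofReal_ne_zero, hN.ne']
  have hz := hz0 hN
  have hzero : ((Real.pi : ℂ) / ((N:ℂ) * Complex.I)) ≠ 0 := by
    rw [hz]
    apply mul_ne_zero
    · exact Complex.ofReal_ne_zero.mpr (by positivity)
    · simpa using Complex.I_ne_zero
  have habs : ‖((Real.pi : ℂ) / ((N:ℂ) * Complex.I))‖ = Real.pi / N := by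
    rw [hz]
    simp [abs_of_pos hπ, abs_of_pos hN]
  have harg : ((Real.pi : ℂ) / ((N:ℂ) * Complex.I)).arg = -(Real.pi/2) := by
    rw [hz, Complex.arg_real_mul _ (by positivity), Complex.arg_neg_I]
  rw [Complex.cpow_def_of_ne_zero hzero, Complex.log, habs, harg]
  have : ((Real.log (Real.pi / N) : ℂ) + (-(Real.pi/2):ℝ) * Complex.I) * (1/2 : ℂ)
      = ((Real.log (Real.pi / N) * (1/2) : ℝ) : ℂ) + (-Complex.I * (Real.pi:ℂ)/4) := by
    push_cast
    ring
  rw [this, Complex.exp_add]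
  congr 1
  rw [← Complex.ofReal_exp]
  norm_cast
  rw [Real.sqrt_eq_rpow, Real.rpow_def_of_pos (by positivity)]

/-- Fresnel-type estimate: for `N > 0` and `0 < t < 1`, the integral
`I(N,t) = ∫_0^1 e^{-iN(y-t)^2} dy` satisfies
`|I(N,t) - √(π/N) e^{-iπ/4}| ≤ (1/t + 1/(1-t))/N`. -/
theorem stmt10 (N t : ℝ) (hN : 0 < N) (ht0 : 0 < t) (ht1 : t < 1) :
    ‖(∫ y in (0 : ℝ)..1, Complex.exp (-Complex.I * (N : ℂ) * ((y : ℂ) - (t : ℂ)) ^ 2)) -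
        (Real.sqrt (Real.pi / N) : ℂ) * Complex.exp (-Complex.I * (Real.pi : ℂ) / 4)‖ ≤
      (1 / t + 1 / (1 - t)) * (1 / N) := by
  have hb0 : ((N:ℂ) * Complex.I).im = N := by simp
  set b0 : ℂ := (N:ℂ) * Complex.I with hb0_def
  have hsub : (∫ y in (0:ℝ)..1, Complex.exp (-Complex.I * (N:ℂ) * ((y:ℂ) - (t:ℂ))^2))
      = ∫ x in (-t)..(1-t), Complex.exp (-b0 * (x:ℂ)^2) := by
    have h1 : (∫ y in (0:ℝ)..1, Complex.exp (-Complex.I * (N:ℂ) * ((y:ℂ) - (t:ℂ))^2))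
        = ∫ y in (0:ℝ)..1, (fun x : ℝ => Complex.exp (-b0 * (x:ℂ)^2)) (y - t) := by
      apply intervalIntegral.integral_congr
      intro y hy
      rw [hb0_def]
      push_cast
      ring_nf
    rw [h1, intervalIntegral.integral_comp_sub_right (fun x : ℝ => Complex.exp (-b0 * (x:ℂ)^2)) t]
    norm_num
  -- sequence of b's
  set bn : ℕ → ℂ := fun n => ((((n:ℝ)+1)⁻¹ : ℝ) : ℂ) + b0 with hbn_def
  have hbn_re : ∀ n : ℕ, (bn n).re = ((n:ℝ)+1)⁻¹ := by
    intro n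
    rw [hbn_def]
    simp only [Complex.add_re, Complex.ofReal_re, hb0_def, Complex.mul_re, Complex.I_re,
      Complex.ofReal_im, Complex.I_im, Complex.ofReal_re]
    ring
  have hbn_im : ∀ n : ℕ, (bn n).im = N := by
    intro n
    rw [hbn_def]
    simp only [Complex.add_im, Complex.ofReal_im, hb0_def, Complex.mul_im, Complex.I_im,
      Complex.ofReal_re, Complex.I_re, Complex.ofReal_im]
    ring
  have hbn_repos : ∀ n : ℕ, 0 < (bn n).re := by
    intro n; rw [hbn_re n]; positivity
  have hbound : ∀ n : ℕ,
      ‖(∫ x in (-t)..(1-t), Complex.exp (-(bn n) * (x:ℂ)^2)) - ((Real.pi:ℂ) / bn n) ^ (1/2:ℂ)‖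
        ≤ 1/(N*t) + 1/(N*(1-t)) :=
    fun n => eps_bound0 hN (hbn_im n) (hbn_repos n) ht0 ht1
  -- limits
  have hblim : Filter.Tendsto bn atTop (𝓝 b0) := by
    have h1 : Filter.Tendsto (fun n : ℕ => (((n:ℝ)+1)⁻¹ : ℝ)) atTop (𝓝 0) := by
      have := tendsto_one_div_add_atTop_nhds_zero_nat (𝕜 := ℝ)
      simpa [one_div] using this
    have h2 : Filter.Tendsto (fun n : ℕ => ((((n:ℝ)+1)⁻¹ : ℝ) : ℂ)) atTop (𝓝 0) := by
      have := (Complex.continuous_ofReal.tendsto 0).comp h1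
      simpa [Function.comp_def] using this
    simpa [hbn_def] using h2.add_const b0
  have hA : Filter.Tendsto (fun n => ∫ x in (-t)..(1-t), Complex.exp (-(bn n) * (x:ℂ)^2)) atTop
      (𝓝 (∫ x in (-t)..(1-t), Complex.exp (-b0 * (x:ℂ)^2))) := by
    apply intervalIntegral.tendsto_integral_filter_of_dominated_convergence (bound := fun _ => 1)
    · filter_upwards with n
      apply Continuous.aestronglyMeasurable
      fun_prop
    · filter_upwards with n
      refine MeasureTheory.ae_of_all _ fun x _ => ?_
      simp only [Complex.norm_exp]
      apply Real.exp_le_one_iff.mpr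
      have : (-(bn n) * ((x:ℂ))^2).re = -(bn n).re * x^2 := by
        simp [Complex.mul_re, pow_two]
      rw [this, hbn_re n]
      have : (0:ℝ) < ((n:ℝ)+1)⁻¹ := by positivity
      nlinarith [sq_nonneg x]
    · exact intervalIntegrable_const
    · refine MeasureTheory.ae_of_all _ fun x _ => ?_
      exact ((hblim.neg.mul_const ((x:ℂ)^2))).cexp
  have hzero : ((Real.pi:ℂ) / b0) ≠ 0 ∧ ((Real.pi:ℂ)/b0).im ≠ 0 := by
    constructor
    · apply div_ne_zero
      · exact Complex.ofReal_ne_zero.mpr Real.pi_pos.ne'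
      · simp [hb0_def, Complex.I_ne_zero, Complex.ofReal_ne_zero, hN.ne']
    · rw [hb0_def, hz0 hN]
      simp only [Complex.mul_im, Complex.ofReal_re, Complex.neg_im, Complex.I_im,
        Complex.ofReal_im, Complex.neg_re, Complex.I_re]
      have : (0:ℝ) < Real.pi / N := by positivity
      intro h
      nlinarith
  have hB : Filter.Tendsto (fun n => ((Real.pi:ℂ) / bn n) ^ (1/2:ℂ)) atTop
      (𝓝 (((Real.pi:ℂ) / b0) ^ (1/2:ℂ))) := by
    have hb0ne : b0 ≠ 0 := by
      simp [hb0_def, Complex.I_ne_zero, Complex.ofReal_ne_zero, hN.ne']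
    have hdiv : Filter.Tendsto (fun n => (Real.pi:ℂ) / bn n) atTop (𝓝 ((Real.pi:ℂ)/b0)) :=
      tendsto_const_nhds.div hblim hb0ne
    have hcont : ContinuousAt (fun z : ℂ => z ^ (1/2:ℂ)) ((Real.pi:ℂ)/b0) :=
      continuousAt_cpow_const (Complex.mem_slitPlane_iff.mpr (Or.inr hzero.2))
    exact hcont.tendsto.comp hdiv
  have hlim := (hA.sub hB).norm
  have hfinal := le_of_tendsto hlim (Filter.Eventually.of_forall hbound)
  rw [hsub, ← heval0 hN]
  calc ‖(∫ x in (-t)..(1-t), Complex.exp (-b0 * (x:ℂ)^2)) - ((Real.pi:ℂ)/b0) ^ (1/2:ℂ)‖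
      ≤ 1/(N*t) + 1/(N*(1-t)) := hfinal
    _ = (1/t + 1/(1-t)) * (1/N) := by
        have h1 : (1:ℝ) - t ≠ 0 := by linarith
        field_simp
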